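/- arXiv:1801.02831 — 3 statements merged into one kernel-verified Lean document; each statement's English description precedes it below -/
import Mathlib

section
/- Let Λ be the (ℓ+1)×(ℓ+1) Jordan block with eigenvalue λ, |λ| > 1, and let v = (x₀,…,x_ℓ) ∈ ℂ^{ℓ+1} be a nonzero vector. Set t := ℓ − min{ i : x_i ≠ 0 }. Then ‖Λ^n v‖ ≍ n^t |λ|^n, i.e., there exist constants C₀, C₁ > 0 and N₀ such that C₀ n^t |λ|^n ≤ ‖Λ^n v‖ ≤ C₁ n^t |λ|^n for all n ≥ N₀. -/
/-- The (ℓ+1)×(ℓ+1) Jordan block with eigenvalue `lam`: `lam` on the diagonal,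
1's on the subdiagonal. -/
noncomputable def jordanBlock (ℓ : ℕ) (lam : ℂ) :
    Matrix (Fin (ℓ + 1)) (Fin (ℓ + 1)) ℂ :=
  fun i j => if i = j then lam else if (i : ℕ) = (j : ℕ) + 1 then 1 else 0

/-- The maximum of the absolute values of the entries of a vector. -/
noncomputable def vnorm {ℓ : ℕ} (v : Fin (ℓ + 1) → ℂ) : ℝ :=
  Finset.univ.sup' Finset.univ_nonempty (fun i => ‖v i‖)

noncomputable def Xext {ℓ : ℕ} (v : Fin (ℓ + 1) → ℂ) (m : ℕ) : ℂ :=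
  if h : m < ℓ + 1 then v ⟨m, h⟩ else 0

lemma Xext_coe {ℓ : ℕ} (v : Fin (ℓ + 1) → ℂ) (j : Fin (ℓ + 1)) :
    Xext v (j : ℕ) = v j := by
  simp [Xext, j.isLt]

lemma jordan_mulVec {ℓ : ℕ} (lam : ℂ) (u : Fin (ℓ + 1) → ℂ) (j : Fin (ℓ + 1)) :
    (jordanBlock ℓ lam).mulVec u j
      = lam * u j + (if h : 0 < (j : ℕ) then
          u ⟨(j : ℕ) - 1, lt_of_le_of_lt (Nat.sub_le _ _) j.isLt⟩ else 0) := by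
  unfold jordanBlock Matrix.mulVec dotProduct
  have hsplit : ∀ m : Fin (ℓ + 1),
      (if j = m then lam else if (j : ℕ) = (m : ℕ) + 1 then 1 else 0) * u m
        = (if m = j then lam * u m else 0)
          + (if (j : ℕ) = (m : ℕ) + 1 then u m else 0) := by
    intro m
    by_cases h1 : j = m
    · subst h1
      simp
    · have h1' : ¬ (m = j) := fun h => h1 h.symm
      simp only [if_neg h1, if_neg h1']
      by_cases h2 : (j : ℕ) = (m : ℕ) + 1 <;> simp [h2]
  simp only [hsplit, Finset.sum_add_distrib]
  congr 1
  · rw [Finset.sum_ite_eq' Finset.univ j (fun m => lam * u m)]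
    simp
  · by_cases hj : 0 < (j : ℕ)
    · rw [dif_pos hj]
      set m0 : Fin (ℓ + 1) := ⟨(j : ℕ) - 1, lt_of_le_of_lt (Nat.sub_le _ _) j.isLt⟩
      rw [Finset.sum_eq_single m0]
      · rw [if_pos]
        show (j : ℕ) = (j : ℕ) - 1 + 1
        omega
      · intro m _ hm
        rw [if_neg]
        intro h
        apply hm
        apply Fin.ext
        show (m : ℕ) = (j : ℕ) - 1
        omega
      · intro h; exact absurd (Finset.mem_univ m0) h
    · rw [dif_neg hj]
      apply Finset.sum_eq_zero
      intro m _
      rw [if_neg]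
      omega

lemma jordan_pow_mulVec {ℓ : ℕ} (lam : ℂ) (v : Fin (ℓ + 1) → ℂ) (n : ℕ) (j : Fin (ℓ + 1)) :
    ((jordanBlock ℓ lam) ^ n).mulVec v j
      = ∑ k ∈ Finset.range (ℓ + 1),
          if k ≤ (j : ℕ) then (n.choose k : ℂ) * lam ^ (n - k) * Xext v ((j : ℕ) - k)
          else 0 := by
  induction n generalizing j with
  | zero =>
    rw [pow_zero, Matrix.one_mulVec]
    rw [Finset.sum_eq_single 0]
    · simp [Xext_coe]
    · intro k _ hk
      rw [Nat.choose_eq_zero_of_lt (Nat.pos_of_ne_zero hk)]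
      simp
    · simp
  | succ n ih =>
    rw [pow_succ', ← Matrix.mulVec_mulVec, jordan_mulVec, ih]
    have hd : (if h : 0 < (j : ℕ) then
          ((jordanBlock ℓ lam) ^ n).mulVec v
            ⟨(j : ℕ) - 1, lt_of_le_of_lt (Nat.sub_le _ _) j.isLt⟩ else 0)
        = ∑ k ∈ Finset.range (ℓ + 1),
            (if k + 1 ≤ (j : ℕ) then
              (n.choose k : ℂ) * lam ^ (n - k) * Xext v ((j : ℕ) - (k + 1)) else 0) := by
      by_cases hj : 0 < (j : ℕ)
      · rw [dif_pos hj, ih]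
        have hco : ((⟨(j : ℕ) - 1, lt_of_le_of_lt (Nat.sub_le _ _) j.isLt⟩ : Fin (ℓ+1)) : ℕ)
            = (j : ℕ) - 1 := rfl
        simp only [hco]
        apply Finset.sum_congr rfl
        intro k _
        by_cases hk : k + 1 ≤ (j : ℕ)
        · rw [if_pos (by omega : k ≤ (j:ℕ) - 1), if_pos hk]
          congr 2
          omega
        · rw [if_neg (by omega), if_neg hk]
      · rw [dif_neg hj]
        symm
        apply Finset.sum_eq_zero
        intro k _
        rw [if_neg (by omega)]
    rw [hd, Finset.mul_sum]
    -- termwise: T k = lam * A k + b k, then reindex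
    have key : ∀ k, (if k ≤ (j : ℕ) then
          ((n+1).choose k : ℂ) * lam ^ (n + 1 - k) * Xext v ((j : ℕ) - k) else 0)
        = lam * (if k ≤ (j : ℕ) then
            (n.choose k : ℂ) * lam ^ (n - k) * Xext v ((j : ℕ) - k) else 0)
          + (if 1 ≤ k ∧ k ≤ (j : ℕ) then
            (n.choose (k - 1) : ℂ) * lam ^ (n + 1 - k) * Xext v ((j : ℕ) - k) else 0) := by
      intro k
      by_cases hk : k ≤ (j : ℕ)
      · rw [if_pos hk, if_pos hk]
        match k with
        | 0 =>
          simp only [Nat.choose_zero_right, Nat.cast_one, Nat.sub_zero]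
          rw [if_neg (by omega)]
          rw [pow_succ']
          ring
        | m + 1 =>
          rw [if_pos ⟨by omega, hk⟩]
          have h0 : m + 1 - 1 = m := by omega
          have h1 : n + 1 - (m + 1) = n - m := by omega
          rw [h0, h1]
          have hch : (((n+1).choose (m+1) : ℕ) : ℂ) * lam ^ (n - m)
              = lam * (n.choose (m+1) : ℂ) * lam ^ (n - (m+1))
                + (n.choose m : ℂ) * lam ^ (n - m) := by
            by_cases hm : m + 1 ≤ n
            · rw [Nat.choose_succ_succ, Nat.cast_add]
              have h2 : n - m = (n - (m + 1)) + 1 := by omega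
              rw [h2, pow_succ']
              ring
            · have hz : n.choose (m+1) = 0 := Nat.choose_eq_zero_of_lt (by omega)
              rw [Nat.choose_succ_succ, hz, Nat.add_zero]
              push_cast
              ring
          linear_combination hch * Xext v ((j : ℕ) - (m + 1))
      · rw [if_neg hk, if_neg hk, if_neg (by omega)]
        ring
    symm
    simp only [key]
    rw [Finset.sum_add_distrib]
    congr 1
    -- reindex
    rw [Finset.sum_range_succ' (fun k => if 1 ≤ k ∧ k ≤ (j : ℕ) then
        (n.choose (k - 1) : ℂ) * lam ^ (n + 1 - k) * Xext v ((j : ℕ) - k) else 0)]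
    rw [if_neg (by omega)]
    rw [add_zero]
    rw [Finset.sum_range_succ (fun k => if k + 1 ≤ (j : ℕ) then
        (n.choose k : ℂ) * lam ^ (n - k) * Xext v ((j : ℕ) - (k + 1)) else 0)]
    rw [if_neg (by have := j.isLt; omega : ¬ (ℓ + 1 ≤ (j:ℕ)))]
    rw [add_zero]
    apply Finset.sum_congr rfl
    intro k _
    by_cases hk : k + 1 ≤ (j : ℕ)
    · rw [if_pos ⟨by omega, hk⟩, if_pos hk]
      have hnk : n + 1 - (k + 1) = n - k := by omega
      have hk1 : k + 1 - 1 = k := by omega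
      rw [hnk, hk1]
    · rw [if_neg (by omega), if_neg hk]

lemma le_vnorm {ℓ : ℕ} (u : Fin (ℓ + 1) → ℂ) (j : Fin (ℓ + 1)) :
    ‖u j‖ ≤ vnorm u :=
  Finset.le_sup' (fun i => ‖u i‖) (Finset.mem_univ j)

lemma vnorm_le {ℓ : ℕ} (u : Fin (ℓ + 1) → ℂ) (b : ℝ)
    (h : ∀ i, ‖u i‖ ≤ b) : vnorm u ≤ b :=
  Finset.sup'_le _ _ (fun i _ => h i)

theorem jordan_power_vec_asymp (ℓ : ℕ) (lam : ℂ) (hlam : 1 < ‖lam‖)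
    (v : Fin (ℓ + 1) → ℂ) (i₀ : Fin (ℓ + 1)) (hi₀ : v i₀ ≠ 0)
    (hmin : ∀ j : Fin (ℓ + 1), j < i₀ → v j = 0) :
    ∃ (C₀ C₁ : ℝ) (N₀ : ℕ), 0 < C₀ ∧ 0 < C₁ ∧
      ∀ n : ℕ, N₀ ≤ n →
        C₀ * (n : ℝ) ^ (ℓ - (i₀ : ℕ)) * ‖lam‖ ^ n ≤
            vnorm (((jordanBlock ℓ lam) ^ n).mulVec v) ∧
        vnorm (((jordanBlock ℓ lam) ^ n).mulVec v) ≤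
            C₁ * (n : ℝ) ^ (ℓ - (i₀ : ℕ)) * ‖lam‖ ^ n := by
  set a : ℝ := ‖lam‖ with ha
  have ha1 : (1:ℝ) < a := hlam
  have ha0 : (0:ℝ) < a := by linarith
  set t := ℓ - (i₀ : ℕ) with htdef
  have hi₀ℓ : (i₀ : ℕ) ≤ ℓ := Nat.lt_succ_iff.mp i₀.isLt
  set c : ℝ := ‖v i₀‖ with hc
  have hc0 : (0:ℝ) < c := norm_pos_iff.mpr hi₀
  set M : ℝ := vnorm v with hMdef
  have hMc : c ≤ M := le_vnorm v i₀
  have hM0 : (0:ℝ) < M := lt_of_lt_of_le hc0 hMc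
  have hXb : ∀ m, ‖Xext v m‖ ≤ M := by
    intro m
    unfold Xext
    split
    · exact le_vnorm v _
    · simpa using hM0.le
  have hX0 : ∀ m, m < (i₀ : ℕ) → Xext v m = 0 := by
    intro m hm
    unfold Xext
    split
    · exact hmin _ (by simpa [Fin.lt_def] using hm)
    · rfl
  -- upper bound
  have hub : ∀ n : ℕ, 1 ≤ n → vnorm (((jordanBlock ℓ lam) ^ n).mulVec v)
      ≤ ((ℓ:ℝ) + 1) * M * (n:ℝ) ^ t * a ^ n := by
    intro n hn
    have hn1 : (1:ℝ) ≤ (n:ℝ) := by exact_mod_cast hn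
    apply vnorm_le
    intro j
    rw [jordan_pow_mulVec]
    have hjl : (j : ℕ) ≤ ℓ := Nat.lt_succ_iff.mp j.isLt
    calc ‖∑ k ∈ Finset.range (ℓ + 1),
            if k ≤ (j : ℕ) then (n.choose k : ℂ) * lam ^ (n - k) * Xext v ((j : ℕ) - k) else 0‖
        ≤ ∑ k ∈ Finset.range (ℓ + 1), 
            ‖if k ≤ (j : ℕ) then (n.choose k : ℂ) * lam ^ (n - k) * Xext v ((j : ℕ) - k) else 0‖ :=
          norm_sum_le _ _
      _ ≤ ∑ _k ∈ Finset.range (ℓ + 1), (n:ℝ) ^ t * a ^ n * M := by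
          apply Finset.sum_le_sum
          intro k _
          by_cases hkj : k ≤ (j : ℕ)
          · rw [if_pos hkj]
            by_cases hx : (j : ℕ) - k < (i₀ : ℕ)
            · rw [hX0 _ hx, mul_zero, norm_zero]
              positivity
            · have hkt : k ≤ t := by omega
              rw [norm_mul, norm_mul, Complex.norm_natCast, norm_pow]
              have h1 : (n.choose k : ℝ) ≤ (n:ℝ) ^ t := by
                calc (n.choose k : ℝ) ≤ (n:ℝ) ^ k := by exact_mod_cast Nat.choose_le_pow n k
                  _ ≤ (n:ℝ) ^ t := pow_le_pow_right₀ hn1 hkt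
              have h2 : a ^ (n - k) ≤ a ^ n := pow_le_pow_right₀ ha1.le (Nat.sub_le n k)
              exact mul_le_mul (mul_le_mul h1 h2 (by positivity) (by positivity))
                (hXb _) (by positivity) (by positivity)
          · rw [if_neg hkj, norm_zero]
            positivity
      _ = ((ℓ:ℝ) + 1) * M * (n:ℝ) ^ t * a ^ n := by
          rw [Finset.sum_const, Finset.card_range]
          push_cast
          ring
  -- the last entry formula
  have hlast : ∀ n : ℕ, ((jordanBlock ℓ lam) ^ n).mulVec v (Fin.last ℓ)
      = ∑ k ∈ Finset.range (ℓ + 1), (n.choose k : ℂ) * lam ^ (n - k) * Xext v (ℓ - k) := by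
    intro n
    rw [jordan_pow_mulVec]
    apply Finset.sum_congr rfl
    intro k hk
    rw [Finset.mem_range] at hk
    rw [if_pos (by simp [Fin.val_last]; omega : k ≤ ((Fin.last ℓ : Fin (ℓ+1)) : ℕ))]
    simp [Fin.val_last]
  by_cases ht0 : t = 0
  · -- i₀ = last
    have hi₀l : (i₀ : ℕ) = ℓ := by omega
    refine ⟨c, ((ℓ:ℝ) + 1) * M, 1, hc0, by positivity, ?_⟩
    intro n hn
    constructor
    · have hw : ((jordanBlock ℓ lam) ^ n).mulVec v (Fin.last ℓ) = lam ^ n * v i₀ := by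
        rw [hlast, Finset.sum_eq_single 0]
        · have h1 : ℓ - 0 = ((i₀ : Fin (ℓ+1)) : ℕ) := by omega
          rw [h1]
          unfold Xext
          rw [dif_pos i₀.isLt]
          simp
        · intro k hkm hk
          rw [Finset.mem_range] at hkm
          rw [hX0 (ℓ - k) (by omega), mul_zero]
        · simp
      have habs : ‖((jordanBlock ℓ lam) ^ n).mulVec v (Fin.last ℓ)‖ = a ^ n * c := by
        rw [hw, norm_mul, norm_pow]
      calc c * (n:ℝ) ^ t * a ^ n = a ^ n * c := by rw [ht0, pow_zero]; ring
        _ = ‖((jordanBlock ℓ lam) ^ n).mulVec v (Fin.last ℓ)‖ := habs.symm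
        _ ≤ vnorm (((jordanBlock ℓ lam) ^ n).mulVec v) := le_vnorm _ _
    · exact le_trans (hub n hn) (le_of_eq (by ring))
  · have ht1 : 1 ≤ t := Nat.pos_of_ne_zero ht0
    set D : ℝ := c / (2 ^ t * (t.factorial : ℝ) * a ^ t) with hD
    have hD0 : (0:ℝ) < D := by positivity
    set N₀ : ℕ := max (2 * t) ⌈2 * (ℓ:ℝ) * M / D⌉₊ + 1 with hN₀
    refine ⟨D / 2, ((ℓ:ℝ) + 1) * M, N₀, by positivity, by positivity, ?_⟩
    intro n hn
    have hn1 : 1 ≤ n := by omega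
    have hn1' : (1:ℝ) ≤ (n:ℝ) := by exact_mod_cast hn1
    have hn2t : 2 * t ≤ n := by
      have := le_max_left (2 * t) ⌈2 * (ℓ:ℝ) * M / D⌉₊
      omega
    have hnD : 2 * (ℓ:ℝ) * M / D ≤ (n:ℝ) := by
      have h1 : ⌈2 * (ℓ:ℝ) * M / D⌉₊ ≤ n := by
        have := le_max_right (2 * t) ⌈2 * (ℓ:ℝ) * M / D⌉₊
        omega
      exact le_trans (Nat.le_ceil _) (by exact_mod_cast h1)
    refine ⟨?_, le_trans (hub n hn1) (le_of_eq (by ring))⟩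
    -- lower bound
    have hmem : t ∈ Finset.range (ℓ + 1) := by
      rw [Finset.mem_range]; omega
    set termT : ℂ := (n.choose t : ℂ) * lam ^ (n - t) * Xext v (ℓ - t) with hTT
    set R : ℂ := ∑ k ∈ (Finset.range (ℓ + 1)).erase t,
        (n.choose k : ℂ) * lam ^ (n - k) * Xext v (ℓ - k) with hRR
    have hsplit : ((jordanBlock ℓ lam) ^ n).mulVec v (Fin.last ℓ) = termT + R := by
      rw [hlast]
      exact (Finset.add_sum_erase _ _ hmem).symm
    have hXt : Xext v (ℓ - t) = v i₀ := by
      have h1 : ℓ - t = (i₀ : ℕ) := by omega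
      rw [h1]
      unfold Xext
      rw [dif_pos i₀.isLt]
    -- bound on R
    have hRb : ‖R‖ ≤ (ℓ:ℝ) * (M * (n:ℝ) ^ (t - 1) * a ^ n) := by
      rw [hRR]
      calc ‖∑ k ∈ (Finset.range (ℓ + 1)).erase t,
              (n.choose k : ℂ) * lam ^ (n - k) * Xext v (ℓ - k)‖
          ≤ ∑ k ∈ (Finset.range (ℓ + 1)).erase t,
              ‖(n.choose k : ℂ) * lam ^ (n - k) * Xext v (ℓ - k)‖ :=
            norm_sum_le _ _
        _ ≤ ∑ _k ∈ (Finset.range (ℓ + 1)).erase t, M * (n:ℝ) ^ (t - 1) * a ^ n := by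
            apply Finset.sum_le_sum
            intro k hk
            rw [Finset.mem_erase, Finset.mem_range] at hk
            obtain ⟨hkt, hkl⟩ := hk
            rcases lt_or_gt_of_ne hkt with hlt | hgt
            · -- k < t
              rw [norm_mul, norm_mul, Complex.norm_natCast, norm_pow]
              have h1 : (n.choose k : ℝ) ≤ (n:ℝ) ^ (t - 1) := by
                calc (n.choose k : ℝ) ≤ (n:ℝ) ^ k := by exact_mod_cast Nat.choose_le_pow n k
                  _ ≤ (n:ℝ) ^ (t - 1) := pow_le_pow_right₀ hn1' (by omega)
              have h2 : a ^ (n - k) ≤ a ^ n := pow_le_pow_right₀ ha1.le (Nat.sub_le n k)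
              calc (n.choose k : ℝ) * a ^ (n - k) * ‖Xext v (ℓ - k)‖
                  ≤ (n:ℝ) ^ (t - 1) * a ^ n * M :=
                    mul_le_mul (mul_le_mul h1 h2 (by positivity) (by positivity))
                      (hXb _) (by positivity) (by positivity)
                _ = M * (n:ℝ) ^ (t - 1) * a ^ n := by ring
            · -- k > t : the Xext factor is zero
              rw [hX0 (ℓ - k) (by omega), mul_zero, norm_zero]
              positivity
        _ = (ℓ:ℝ) * (M * (n:ℝ) ^ (t - 1) * a ^ n) := by
            rw [Finset.sum_const, Finset.card_erase_of_mem hmem, Finset.card_range]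
            simp [nsmul_eq_mul]
    -- bound on termT
    have htermT : (n:ℝ) ^ t * a ^ n * D ≤ ‖termT‖ := by
      have hch : ((n:ℝ) / 2) ^ t / (t.factorial : ℝ) ≤ (n.choose t : ℝ) := by
        have hcast : (n:ℝ) / 2 ≤ ((n + 1 - t : ℕ) : ℝ) := by
          have h2 : n ≤ 2 * (n + 1 - t) := by omega
          have h2' : (n:ℝ) ≤ 2 * ((n + 1 - t : ℕ) : ℝ) := by exact_mod_cast h2
          linarith
        calc ((n:ℝ) / 2) ^ t / (t.factorial : ℝ)
            ≤ (((n + 1 - t : ℕ) : ℝ)) ^ t / (t.factorial : ℝ) := by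
              gcongr
          _ ≤ (n.choose t : ℝ) := by
              have := Nat.pow_le_choose (α := ℝ) t n
              exact_mod_cast this
      have habsT : ‖termT‖ = (n.choose t : ℝ) * a ^ (n - t) * c := by
        rw [hTT, norm_mul, norm_mul, Complex.norm_natCast, norm_pow, hXt]
      have hant : a ^ (n - t) = a ^ n / a ^ t := by
        rw [eq_div_iff (by positivity), ← pow_add]
        congr 1
        omega
      rw [habsT, hant]
      have hstep : (n:ℝ) ^ t * a ^ n * D = (((n:ℝ) / 2) ^ t / (t.factorial : ℝ)) * (a ^ n / a ^ t) * c := by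
        rw [hD]
        field_simp
        rw [← mul_pow]; ring
      rw [hstep]
      exact mul_le_mul_of_nonneg_right (mul_le_mul_of_nonneg_right hch (by positivity)) hc0.le
    -- combine
    have hTR : ‖termT‖ - ‖R‖
        ≤ ‖((jordanBlock ℓ lam) ^ n).mulVec v (Fin.last ℓ)‖ := by
      rw [hsplit]
      have h2 : ‖termT‖ ≤ ‖termT + R‖ + ‖R‖ := by
        calc ‖termT‖ = ‖(termT + R) + (-R)‖ := by ring_nf
          _ ≤ ‖termT + R‖ + ‖-R‖ := norm_add_le _ _
          _ = ‖termT + R‖ + ‖R‖ := by rw [norm_neg]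
      linarith
    have hRsmall : (ℓ:ℝ) * (M * (n:ℝ) ^ (t - 1) * a ^ n) ≤ D / 2 * (n:ℝ) ^ t * a ^ n := by
      have hnt : (n:ℝ) ^ t = (n:ℝ) ^ (t - 1) * (n:ℝ) := by
        rw [← pow_succ]
        congr 1
        omega
      have hlM : 2 * (ℓ:ℝ) * M ≤ (n:ℝ) * D := by
        rw [div_le_iff₀ hD0] at hnD
        linarith
      rw [hnt]
      have hkey : (ℓ:ℝ) * M ≤ D / 2 * (n:ℝ) := by linarith
      calc (ℓ:ℝ) * (M * (n:ℝ) ^ (t - 1) * a ^ n)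
          = ((ℓ:ℝ) * M) * ((n:ℝ) ^ (t - 1) * a ^ n) := by ring
        _ ≤ (D / 2 * (n:ℝ)) * ((n:ℝ) ^ (t - 1) * a ^ n) :=
            mul_le_mul_of_nonneg_right hkey (by positivity)
        _ = D / 2 * ((n:ℝ) ^ (t - 1) * (n:ℝ)) * a ^ n := by ring
    calc D / 2 * (n:ℝ) ^ t * a ^ n
        = (n:ℝ) ^ t * a ^ n * D - D / 2 * (n:ℝ) ^ t * a ^ n := by ring
      _ ≤ ‖termT‖ - ‖R‖ := by
          have := hRb.trans hRsmall
          linarith [htermT]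
      _ ≤ ‖((jordanBlock ℓ lam) ^ n).mulVec v (Fin.last ℓ)‖ := hTR
      _ ≤ vnorm (((jordanBlock ℓ lam) ^ n).mulVec v) := le_vnorm _ _
end

section
/- Lower bound part of Lemma on vector growth: for the Jordan block Λ with |λ| > 1 and a vector v with x₀ ≠ 0, the bottom coordinate satisfies |(Λ^n v)_ℓ| ≥ C n^ℓ |λ|^n for some constant C > 0 and all sufficiently large n. -/
def Nmat (ℓ : ℕ) : Matrix (Fin (ℓ + 1)) (Fin (ℓ + 1)) ℂ :=
  fun i j => if (i : ℕ) = (j : ℕ) + 1 then 1 else 0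

lemma jordan_eq (ℓ : ℕ) (lam : ℂ) : jordanBlock ℓ lam = lam • (1 : Matrix (Fin (ℓ+1)) (Fin (ℓ+1)) ℂ) + Nmat ℓ := by
  funext i j
  by_cases h : i = j
  · subst h
    simp [jordanBlock, Nmat, Matrix.one_apply]
  · have h' : (i : ℕ) ≠ (j : ℕ) := fun hh => h (Fin.ext hh)
    simp [jordanBlock, Nmat, Matrix.one_apply, h, h']

lemma Nmat_pow (ℓ k : ℕ) (i j : Fin (ℓ+1)) :
    ((Nmat ℓ) ^ k) i j = if (i : ℕ) = (j : ℕ) + k then 1 else 0 := by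
  induction k generalizing i j with
  | zero => simp [Matrix.one_apply, Fin.ext_iff]
  | succ k ih =>
    rw [pow_succ', Matrix.mul_apply]
    by_cases hle : (j : ℕ) + k ≤ ℓ
    · have : ∑ m : Fin (ℓ+1), Nmat ℓ i m * ((Nmat ℓ) ^ k) m j
          = Nmat ℓ i ⟨(j:ℕ)+k, by omega⟩ := by
        rw [Finset.sum_eq_single (⟨(j:ℕ)+k, by omega⟩ : Fin (ℓ+1))]
        · rw [ih]; simp
        · intro m _ hm
          rw [ih]
          have : (m : ℕ) ≠ (j : ℕ) + k := by
            intro hh; exact hm (Fin.ext hh)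
          simp [this]
        · simp
      rw [this]
      simp [Nmat, add_assoc]
    · have h1 : ∀ m : Fin (ℓ+1), Nmat ℓ i m * ((Nmat ℓ) ^ k) m j = 0 := by
        intro m
        rw [ih]
        have : (m : ℕ) ≠ (j : ℕ) + k := by omega
        simp [this]
      have h2 : (i : ℕ) ≠ (j : ℕ) + (k + 1) := by omega
      simp [h1, h2]

lemma natCast_mat (ℓ m : ℕ) : ((m : ℕ) : Matrix (Fin (ℓ+1)) (Fin (ℓ+1)) ℂ) = ((m : ℂ)) • (1 : Matrix (Fin (ℓ+1)) (Fin (ℓ+1)) ℂ) := by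
  rw [Nat.cast_smul_eq_nsmul]; simp

lemma jordan_pow_apply (ℓ : ℕ) (lam : ℂ) (n : ℕ) (i j : Fin (ℓ+1)) :
    ((jordanBlock ℓ lam) ^ n) i j =
      ∑ k ∈ Finset.range (n+1), (n.choose k : ℂ) * lam ^ (n-k) * (((Nmat ℓ) ^ k) i j) := by
  have hc : Commute (Nmat ℓ) (lam • (1 : Matrix (Fin (ℓ+1)) (Fin (ℓ+1)) ℂ)) :=
    (Commute.one_right (Nmat ℓ)).smul_right lam
  rw [jordan_eq ℓ lam, show lam • (1 : Matrix (Fin (ℓ+1)) (Fin (ℓ+1)) ℂ) + Nmat ℓ = Nmat ℓ + lam • 1 from add_comm _ _, hc.add_pow, Matrix.sum_apply]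
  refine Finset.sum_congr rfl fun k hk => ?_
  rw [smul_pow, one_pow, natCast_mat, mul_smul_comm, Matrix.mul_one, mul_smul_comm,
    smul_smul, Matrix.smul_apply, Matrix.mul_one, smul_eq_mul]

lemma key_formula (ℓ : ℕ) (lam : ℂ) (n : ℕ) (hn : ℓ ≤ n) (v : Fin (ℓ+1) → ℂ) :
    ((jordanBlock ℓ lam) ^ n).mulVec v (Fin.last ℓ) =
      ∑ k ∈ Finset.range (ℓ+1), (n.choose k : ℂ) * lam ^ (n-k) * v ⟨ℓ - k, by omega⟩ := by
  have hNv : ∀ k : ℕ, (∑ j : Fin (ℓ+1), ((Nmat ℓ)^k) (Fin.last ℓ) j * v j)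
      = if h : k ≤ ℓ then v ⟨ℓ - k, by omega⟩ else 0 := by
    intro k
    by_cases h : k ≤ ℓ
    · rw [dif_pos h, Finset.sum_eq_single (⟨ℓ - k, by omega⟩ : Fin (ℓ+1))]
      · rw [Nmat_pow, if_pos (by simp only [Fin.val_last]; omega), one_mul]
      · intro m _ hm
        have hm' : (m : ℕ) ≠ ℓ - k := fun hh => hm (Fin.ext hh)
        rw [Nmat_pow, if_neg (by simp only [Fin.val_last]; omega), zero_mul]
      · simp
    · rw [dif_neg h]
      apply Finset.sum_eq_zero
      intro m _
      have hmlt : (m : ℕ) < ℓ + 1 := m.isLt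
      rw [Nmat_pow, if_neg (by simp only [Fin.val_last]; omega), zero_mul]
  have hmain : ((jordanBlock ℓ lam) ^ n).mulVec v (Fin.last ℓ)
      = ∑ k ∈ Finset.range (n+1), (n.choose k : ℂ) * lam ^ (n-k)
          * (∑ j : Fin (ℓ+1), ((Nmat ℓ)^k) (Fin.last ℓ) j * v j) := by
    simp only [Matrix.mulVec, dotProduct, jordan_pow_apply]
    simp_rw [Finset.sum_mul]
    rw [Finset.sum_comm]
    simp_rw [mul_assoc, ← Finset.mul_sum]
  rw [hmain, ← Finset.sum_subset (Finset.range_subset_range.mpr (Nat.succ_le_succ hn))]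
  · refine Finset.sum_congr rfl fun k hk => ?_
    have hk' : k ≤ ℓ := by
      have := Finset.mem_range.mp hk; omega
    rw [hNv, dif_pos hk']
  · intro x _ hx
    have hx' : ¬ x ≤ ℓ := by
      intro hh; exact hx (Finset.mem_range.mpr (by omega))
    rw [hNv, dif_neg hx', mul_zero]

lemma lower_aux (T c : ℂ) (b e : ℝ) (hb : b ≤ ‖c‖) (he : ‖T‖ ≤ e) :
    b - e ≤ ‖T + c‖ := by
  have h : ‖c‖ ≤ ‖T + c‖ + ‖T‖ := by
    have := norm_add_le (T + c) (-T)
    simpa using this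
  linarith

theorem jordan_power_vec_lower (ℓ : ℕ) (lam : ℂ) (hlam : 1 < ‖lam‖)
    (v : Fin (ℓ + 1) → ℂ) (hv : v 0 ≠ 0) :
    ∃ (C : ℝ) (N₀ : ℕ), 0 < C ∧
      ∀ n : ℕ, N₀ ≤ n →
        C * (n : ℝ) ^ ℓ * ‖lam‖ ^ n ≤
          ‖((jordanBlock ℓ lam) ^ n).mulVec v (Fin.last ℓ)‖ := by
  set r := ‖lam‖ with hrdef
  have hr0 : (0:ℝ) < r := by linarith
  set a0 := ‖v 0‖ with ha0def
  have ha0 : 0 < a0 := by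
    simpa [ha0def] using (norm_pos_iff.mpr hv)
  set M := vnorm v with hMdef
  have hMle : ∀ i, ‖v i‖ ≤ M := fun i =>
    Finset.le_sup' (fun i => ‖v i‖) (Finset.mem_univ i)
  have hM0 : 0 < M := lt_of_lt_of_le ha0 (hMle 0)
  set F : ℝ := (Nat.factorial ℓ : ℝ) with hFdef
  have hF : 0 < F := by
    simp [hFdef]; positivity
  set A : ℝ := a0 / (F * 2^ℓ * r^ℓ) with hAdef
  have hA : 0 < A := by positivity
  refine ⟨A/2, max (2*ℓ+1) (Nat.ceil (2*ℓ*M/A) + 1), by positivity, ?_⟩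
  intro n hn
  have hn1 : 2*ℓ+1 ≤ n := le_trans (le_max_left _ _) hn
  have hnc : (2*ℓ*M/A : ℝ) ≤ n := by
    have h1 : Nat.ceil (2*ℓ*M/A) + 1 ≤ n := le_trans (le_max_right _ _) hn
    calc (2*ℓ*M/A : ℝ) ≤ (Nat.ceil (2*ℓ*M/A : ℝ) : ℝ) := Nat.le_ceil _
      _ ≤ n := by exact_mod_cast Nat.le_of_succ_le h1
  have hℓn : ℓ ≤ n := by omega
  have hn0 : (0:ℝ) < n := by
    have : (1:ℕ) ≤ n := by omega
    exact_mod_cast Nat.lt_of_lt_of_le Nat.zero_lt_one this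
  have hn1' : (1:ℝ) ≤ n := by exact_mod_cast (by omega : 1 ≤ n)
  rw [key_formula ℓ lam n hℓn v, Finset.sum_range_succ]
  -- lower bound on main term
  have hcℓ : A * (n:ℝ)^ℓ * r^n ≤
      ‖(n.choose ℓ : ℂ) * lam ^ (n-ℓ) * v ⟨ℓ - ℓ, by omega⟩‖ := by
    have hv0 : (⟨ℓ - ℓ, by omega⟩ : Fin (ℓ+1)) = 0 := by
      ext; simp
    rw [hv0, norm_mul, norm_mul, norm_pow, Complex.norm_natCast, ← hrdef, ← ha0def]
    have hrsub : r^(n-ℓ) = r^n / r^ℓ := by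
      field_simp
      rw [← pow_add]
      congr 1
      omega
    have hhalf : ((n:ℝ)/2)^ℓ ≤ ((n + 1 - ℓ : ℕ):ℝ)^ℓ := by
      apply pow_le_pow_left₀ (by positivity)
      have : ((n + 1 - ℓ : ℕ):ℝ) = (n:ℝ) + 1 - ℓ := by
        push_cast [Nat.cast_sub (by omega : ℓ ≤ n + 1)]
        ring
      rw [this]
      have : (ℓ:ℝ) * 2 ≤ n := by exact_mod_cast (by omega : ℓ * 2 ≤ n)
      linarith
    have hchoose : ((n + 1 - ℓ : ℕ) : ℝ)^ℓ / F ≤ (n.choose ℓ : ℝ) :=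
      Nat.pow_le_choose ℓ n
    calc A * (n:ℝ)^ℓ * r^n = ((n:ℝ)/2)^ℓ / F * (r^n / r^ℓ) * a0 := by
          rw [hAdef, div_pow]
          field_simp
      _ ≤ ((n + 1 - ℓ : ℕ):ℝ)^ℓ / F * (r^n / r^ℓ) * a0 := by gcongr
      _ ≤ (n.choose ℓ : ℝ) * (r^n / r^ℓ) * a0 := by
          gcongr
      _ = (n.choose ℓ : ℝ) * r^(n-ℓ) * a0 := by rw [hrsub]
  -- upper bound on error term
  have hT : ‖∑ k ∈ Finset.range ℓ,
        (n.choose k : ℂ) * lam ^ (n-k) * v ⟨ℓ - k, by omega⟩‖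
      ≤ (ℓ:ℝ) * ((n:ℝ)^(ℓ-1) * r^n * M) := by
    calc ‖∑ k ∈ Finset.range ℓ,
          (n.choose k : ℂ) * lam ^ (n-k) * v ⟨ℓ - k, by omega⟩‖
        ≤ ∑ k ∈ Finset.range ℓ,
            ‖(n.choose k : ℂ) * lam ^ (n-k) * v ⟨ℓ - k, by omega⟩‖ :=
          norm_sum_le _ _
      _ ≤ ∑ _k ∈ Finset.range ℓ, (n:ℝ)^(ℓ-1) * r^n * M := by
          apply Finset.sum_le_sum
          intro k hk
          have hkℓ : k ≤ ℓ - 1 := by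
            have := Finset.mem_range.mp hk; omega
          rw [norm_mul, norm_mul, norm_pow, Complex.norm_natCast, ← hrdef]
          have h1 : (n.choose k : ℝ) ≤ (n:ℝ)^(ℓ-1) := by
            calc (n.choose k : ℝ) ≤ ((n ^ k : ℕ) : ℝ) := by
                  exact_mod_cast Nat.choose_le_pow n k
              _ = (n:ℝ)^k := by push_cast; ring
              _ ≤ (n:ℝ)^(ℓ-1) := by
                  exact pow_le_pow_right₀ hn1' hkℓ
          have h2 : r^(n-k) ≤ r^n := pow_le_pow_right₀ (by linarith) (by omega)
          have h3 : ‖v ⟨ℓ - k, by omega⟩‖ ≤ M := hMle _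
          have hcnn : (0:ℝ) ≤ (n.choose k : ℝ) := by positivity
          have hrnn : (0:ℝ) ≤ r^(n-k) := by positivity
          calc (n.choose k : ℝ) * r^(n-k) * ‖v ⟨ℓ - k, by omega⟩‖
              ≤ (n.choose k : ℝ) * r^(n-k) * M := by
                apply mul_le_mul_of_nonneg_left h3 (by positivity)
            _ ≤ (n:ℝ)^(ℓ-1) * r^n * M := by
                apply mul_le_mul_of_nonneg_right _ hM0.le
                exact mul_le_mul h1 h2 hrnn (by positivity)
      _ = (ℓ:ℝ) * ((n:ℝ)^(ℓ-1) * r^n * M) := by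
          rw [Finset.sum_const, Finset.card_range, nsmul_eq_mul]
  refine le_trans ?_ (lower_aux _ _ (A * (n:ℝ)^ℓ * r^n)
    ((ℓ:ℝ) * ((n:ℝ)^(ℓ-1) * r^n * M)) hcℓ hT)
  -- domination
  have hdom : (ℓ:ℝ) * (n:ℝ)^(ℓ-1) * M ≤ (A/2) * (n:ℝ)^ℓ := by
    rcases Nat.eq_zero_or_pos ℓ with h0 | hpos
    · subst h0; simp; positivity
    · have hpow : (n:ℝ)^ℓ = (n:ℝ)^(ℓ-1) * n := by
        rw [← pow_succ]
        congr 1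
        omega
      rw [hpow]
      have h2 : 2*(ℓ:ℝ)*M ≤ A * n := by
        have := (div_le_iff₀ hA).mp hnc
        linarith
      have hpnn : (0:ℝ) ≤ (n:ℝ)^(ℓ-1) := by positivity
      nlinarith
  have hrn : (0:ℝ) < r^n := by positivity
  nlinarith [mul_le_mul_of_nonneg_right hdom hrn.le]
end

section
/- Liminf-normalized height functional equations: let X be a set, f, g: X → X commuting maps, h: X → ℝ_{≥1}, α, β > 1 reals and t ∈ ℤ_{≥0}. Suppose: (i) ĥ: X → ℝ satisfies ĥ(f(x)) = α ĥ(x) for all x; (ii) for R ∈ X, h(g^n(R)) ≍ n^t β^n and also h(g^n(f(R))) ≍ n^t β^n; (iii) ĥ − h is bounded in absolute value by C·√h for some C. Define H(x) := liminf_{n→∞} ĥ(g^n(x)) / (n^t β^n). Then H(R) > 0, H(f(R)) = α H(R), and H(g(R)) = β H(R). -/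
open Filter

private lemma my_le_of_forall_pos_le_add {a b : ℝ} (h : ∀ ε : ℝ, 0 < ε → a ≤ b + ε) : a ≤ b := by
  by_contra hc
  push_neg at hc
  have := h ((a - b) / 2) (by linarith)
  linarith

private lemma my_liminf_eq_of_tendsto_sub {u v : ℕ → ℝ} {a b : ℝ}
    (hlb : ∀ᶠ n in atTop, a ≤ u n) (hub : ∀ᶠ n in atTop, u n ≤ b)
    (hsub : Tendsto (fun n => v n - u n) atTop (nhds 0)) :
    liminf v atTop = liminf u atTop := by
  have hbu : IsBoundedUnder (· ≤ ·) atTop u := isBoundedUnder_of_eventually_le hub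
  have hlu : IsBoundedUnder (· ≥ ·) atTop u := isBoundedUnder_of_eventually_ge hlb
  have hcu : IsCoboundedUnder (· ≥ ·) atTop u := hbu.isCoboundedUnder_ge
  have key : ∀ ε : ℝ, 0 < ε → ∀ᶠ n in atTop, |v n - u n| ≤ ε := by
    intro ε hε
    have := Metric.tendsto_atTop.1 hsub ε hε
    obtain ⟨N, hN⟩ := this
    refine eventually_atTop.2 ⟨N, fun n hn => ?_⟩
    have := hN n hn
    rw [Real.dist_eq, sub_zero] at this
    linarith [this.le]
  have hone := key 1 one_pos
  have hlv : ∀ᶠ n in atTop, a - 1 ≤ v n := by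
    filter_upwards [hlb, hone] with n h1 h2
    have := abs_le.1 h2
    linarith [this.1]
  have hbv : ∀ᶠ n in atTop, v n ≤ b + 1 := by
    filter_upwards [hub, hone] with n h1 h2
    have := abs_le.1 h2
    linarith [this.2]
  have hbuv : IsBoundedUnder (· ≤ ·) atTop v := isBoundedUnder_of_eventually_le hbv
  have hluv : IsBoundedUnder (· ≥ ·) atTop v := isBoundedUnder_of_eventually_ge hlv
  have hcuv : IsCoboundedUnder (· ≥ ·) atTop v := hbuv.isCoboundedUnder_ge
  apply le_antisymm
  · apply my_le_of_forall_pos_le_add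
    intro ε hε
    have h1 : liminf v atTop ≤ liminf (fun n => u n + ε) atTop := by
      apply liminf_le_liminf
      · filter_upwards [key ε hε] with n hn
        have := abs_le.1 hn
        linarith [this.1]
      · exact hluv
      · exact IsBoundedUnder.isCoboundedUnder_ge
          (isBoundedUnder_of_eventually_le (hub.mono fun n hn => by linarith : ∀ᶠ n in atTop, u n + ε ≤ b + ε))
    rwa [liminf_add_const atTop u ε hcu hlu] at h1
  · apply my_le_of_forall_pos_le_add
    intro ε hε
    have h1 : liminf u atTop ≤ liminf (fun n => v n + ε) atTop := by
      apply liminf_le_liminf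
      · filter_upwards [key ε hε] with n hn
        have := abs_le.1 hn
        linarith [this.2]
      · exact hlu
      · exact IsBoundedUnder.isCoboundedUnder_ge
          (isBoundedUnder_of_eventually_le (hbv.mono fun n hn => by linarith : ∀ᶠ n in atTop, v n + ε ≤ b + 1 + ε))
    rwa [liminf_add_const atTop v ε hcuv hluv] at h1

private lemma my_liminf_const_mul {u : ℕ → ℝ} {c : ℝ} (hc : 0 < c)
    (hcu : IsCoboundedUnder (· ≥ ·) atTop u) (hlu : IsBoundedUnder (· ≥ ·) atTop u) :
    liminf (fun n => c * u n) atTop = c * liminf u atTop := by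
  have := Monotone.map_liminf_of_continuousAt (F := atTop) (f := fun x : ℝ => c * x)
    (fun x y hxy => mul_le_mul_of_nonneg_left hxy hc.le) u
    ((continuous_mul_left c).continuousAt) hcu hlu
  exact this.symm

theorem double_canonical_height_functional_equations {X : Type*}
    (f g : X → X) (hcomm : ∀ x, f (g x) = g (f x))
    (h : X → ℝ) (hh : ∀ x, 1 ≤ h x)
    (α β : ℝ) (hα : 1 < α) (hβ : 1 < β) (t : ℕ)
    (hhat : X → ℝ) (hfe : ∀ x, hhat (f x) = α * hhat x)
    (R : X)
    (C₀ C₁ : ℝ) (hC₀ : 0 < C₀) (hC₁ : 0 < C₁) (N₀ : ℕ)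
    (hasympR : ∀ n : ℕ, N₀ ≤ n →
      C₀ * (n : ℝ) ^ t * β ^ n ≤ h (g^[n] R) ∧
      h (g^[n] R) ≤ C₁ * (n : ℝ) ^ t * β ^ n)
    (C₂ C₃ : ℝ) (hC₂ : 0 < C₂) (hC₃ : 0 < C₃) (N₁ : ℕ)
    (hasympfR : ∀ n : ℕ, N₁ ≤ n →
      C₂ * (n : ℝ) ^ t * β ^ n ≤ h (g^[n] (f R)) ∧
      h (g^[n] (f R)) ≤ C₃ * (n : ℝ) ^ t * β ^ n)
    (C : ℝ) (hcomp : ∀ x, |hhat x - h x| ≤ C * Real.sqrt (h x)) :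
    0 < Filter.liminf (fun n : ℕ => hhat (g^[n] R) / ((n : ℝ) ^ t * β ^ n))
          Filter.atTop ∧
    Filter.liminf (fun n : ℕ => hhat (g^[n] (f R)) / ((n : ℝ) ^ t * β ^ n))
          Filter.atTop =
      α * Filter.liminf (fun n : ℕ => hhat (g^[n] R) / ((n : ℝ) ^ t * β ^ n))
          Filter.atTop ∧
    Filter.liminf (fun n : ℕ => hhat (g^[n] (g R)) / ((n : ℝ) ^ t * β ^ n))
          Filter.atTop =
      β * Filter.liminf (fun n : ℕ => hhat (g^[n] R) / ((n : ℝ) ^ t * β ^ n))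
          Filter.atTop := by
  have hβ0 : (0:ℝ) < β := by linarith
  set d : ℕ → ℝ := fun n => (n : ℝ) ^ t * β ^ n with hd_def
  have hdpos : ∀ n : ℕ, 1 ≤ n → 0 < d n := by
    intro n hn
    exact mul_pos (pow_pos (by exact_mod_cast hn : (0:ℝ) < n) t) (pow_pos hβ0 n)
  have hdtop : Tendsto d atTop atTop := by
    have hev : (fun n : ℕ => β ^ n) ≤ᶠ[atTop] d := by
      filter_upwards [eventually_ge_atTop 1] with n hn
      have h1 : (1:ℝ) ≤ (n:ℝ)^t := one_le_pow₀ (by exact_mod_cast hn)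
      have h2 : (0:ℝ) < β ^ n := pow_pos hβ0 n
      simp only [hd_def]
      nlinarith
    exact tendsto_atTop_mono' atTop hev (tendsto_pow_atTop_atTop_of_one_lt hβ)
  have hsq : Tendsto (fun n => Real.sqrt (d n)) atTop atTop := by
    rw [tendsto_atTop]
    intro b
    filter_upwards [hdtop.eventually_ge_atTop (b ^ 2)] with n hn
    calc b ≤ |b| := le_abs_self b
      _ = Real.sqrt (b ^ 2) := (Real.sqrt_sq_eq_abs b).symm
      _ ≤ Real.sqrt (d n) := Real.sqrt_le_sqrt hn
  have hC : 0 ≤ C := by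
    have h1 : (0:ℝ) < Real.sqrt (h R) := Real.sqrt_pos.2 (by linarith [hh R])
    nlinarith [abs_nonneg (hhat R - h R), hcomp R]
  -- error sequence
  set E : ℕ → ℝ := fun n => C * Real.sqrt C₁ / Real.sqrt (d n) with hE_def
  have hE0 : Tendsto E atTop (nhds 0) := Tendsto.div_atTop tendsto_const_nhds hsq
  set u : ℕ → ℝ := fun n => hhat (g^[n] R) / d n with hu_def
  have hbound : ∀ᶠ n in atTop, |u n - h (g^[n] R) / d n| ≤ E n := by
    filter_upwards [eventually_ge_atTop (max N₀ 1)] with n hn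
    have hn1 : 1 ≤ n := le_trans (le_max_right _ _) hn
    have hnN : N₀ ≤ n := le_trans (le_max_left _ _) hn
    have hdp : 0 < d n := hdpos n hn1
    have hsp : 0 < Real.sqrt (d n) := Real.sqrt_pos.2 hdp
    obtain ⟨hlo, hhi⟩ := hasympR n hnN
    have hhi' : h (g^[n] R) ≤ C₁ * d n := by simp only [hd_def]; rw [← mul_assoc]; exact hhi
    have hsqle : Real.sqrt (h (g^[n] R)) ≤ Real.sqrt C₁ * Real.sqrt (d n) := by
      rw [← Real.sqrt_mul hC₁.le]
      exact Real.sqrt_le_sqrt hhi'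
    have habs : |hhat (g^[n] R) - h (g^[n] R)| ≤ C * (Real.sqrt C₁ * Real.sqrt (d n)) :=
      le_trans (hcomp _) (mul_le_mul_of_nonneg_left hsqle hC)
    have heq : u n - h (g^[n] R) / d n = (hhat (g^[n] R) - h (g^[n] R)) / d n := by
      simp only [hu_def]; field_simp
    rw [heq, abs_div, abs_of_pos hdp]; simp only [hE_def]; rw [ div_le_div_iff₀ hdp hsp]
    have hdd : Real.sqrt (d n) * Real.sqrt (d n) = d n := Real.mul_self_sqrt hdp.le
    nlinarith [abs_nonneg (hhat (g^[n] R) - h (g^[n] R))]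
  have hbounds : ∀ᶠ n in atTop, C₀ / 2 ≤ u n ∧ u n ≤ C₁ + C₀ := by
    filter_upwards [hbound, hE0.eventually_lt_const (show (0:ℝ) < C₀ / 2 by linarith),
      eventually_ge_atTop (max N₀ 1)] with n h1 h2 h3
    have hn1 : 1 ≤ n := le_trans (le_max_right _ _) h3
    have hnN : N₀ ≤ n := le_trans (le_max_left _ _) h3
    have hdp : 0 < d n := hdpos n hn1
    obtain ⟨hlo, hhi⟩ := hasympR n hnN
    have hlo' : C₀ * d n ≤ h (g^[n] R) := by simp only [hd_def]; rw [← mul_assoc]; exact hlo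
    have hhi' : h (g^[n] R) ≤ C₁ * d n := by simp only [hd_def]; rw [← mul_assoc]; exact hhi
    have hlo2 : C₀ ≤ h (g^[n] R) / d n := (le_div_iff₀ hdp).2 (by linarith)
    have hhi2 : h (g^[n] R) / d n ≤ C₁ := (div_le_iff₀ hdp).2 (by linarith)
    have := abs_le.1 h1
    constructor <;> [linarith [this.1]; linarith [this.2]]
  have hlbu : ∀ᶠ n in atTop, C₀ / 2 ≤ u n := hbounds.mono fun n hn => hn.1
  have hubu : ∀ᶠ n in atTop, u n ≤ C₁ + C₀ := hbounds.mono fun n hn => hn.2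
  have hbu : IsBoundedUnder (· ≤ ·) atTop u := isBoundedUnder_of_eventually_le hubu
  have hlu : IsBoundedUnder (· ≥ ·) atTop u := isBoundedUnder_of_eventually_ge hlbu
  have hcu : IsCoboundedUnder (· ≥ ·) atTop u := hbu.isCoboundedUnder_ge
  -- Part 1
  have part1 : 0 < liminf u atTop :=
    lt_of_lt_of_le (by linarith) (le_liminf_of_le hcu hlbu)
  -- iterate commutation
  have hiter : ∀ n : ℕ, ∀ x, g^[n] (f x) = f (g^[n] x) := by
    intro n
    induction n with
    | zero => intro x; simp
    | succ n ih =>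
      intro x
      rw [Function.iterate_succ_apply', Function.iterate_succ_apply', ih, hcomm]
  -- Part 2
  have part2 : liminf (fun n : ℕ => hhat (g^[n] (f R)) / d n) atTop = α * liminf u atTop := by
    have heq : (fun n : ℕ => hhat (g^[n] (f R)) / d n) = fun n => α * u n := by
      funext n
      rw [hiter, hfe, hu_def]
      ring
    rw [heq]
    exact my_liminf_const_mul (by linarith) hcu hlu
  -- Part 3
  have hshift : ∀ᶠ n in atTop, C₀ / 2 ≤ u (n + 1) ∧ u (n + 1) ≤ C₁ + C₀ := by
    obtain ⟨N, hN⟩ := eventually_atTop.1 hbounds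
    exact eventually_atTop.2 ⟨N, fun n hn => hN (n + 1) (by omega)⟩
  set s : ℕ → ℝ := fun n => β * u (n + 1) with hs_def
  have hlbs : ∀ᶠ n in atTop, β * (C₀ / 2) ≤ s n :=
    hshift.mono fun n hn => mul_le_mul_of_nonneg_left hn.1 hβ0.le
  have hubs : ∀ᶠ n in atTop, s n ≤ β * (C₁ + C₀) :=
    hshift.mono fun n hn => mul_le_mul_of_nonneg_left hn.2 hβ0.le
  -- ratio tendsto
  set r : ℕ → ℝ := fun n => d (n + 1) / d n with hr_def
  have hrβ : Tendsto r atTop (nhds β) := by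
    have h1 : Tendsto (fun n : ℕ => ((1 : ℝ) + 1 / n) ^ t * β) atTop (nhds β) := by
      have : Tendsto (fun n : ℕ => (1 : ℝ) + 1 / n) atTop (nhds 1) := by
        have : Tendsto (fun n : ℕ => 1 / (n : ℝ)) atTop (nhds 0) := tendsto_one_div_atTop_nhds_zero_nat
        simpa using tendsto_const_nhds.add this
      have hpow : Tendsto (fun n : ℕ => ((1 : ℝ) + 1 / n) ^ t) atTop (nhds 1) := by
        simpa using this.pow t
      simpa using hpow.mul_const β
    apply h1.congr'
    filter_upwards [eventually_ge_atTop 1] with n hn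
    have hn0 : (0:ℝ) < (n : ℝ) := by exact_mod_cast hn
    simp only [hr_def, hd_def]
    push_cast
    field_simp
    rw [div_pow]; field_simp; ring
  have hws : Tendsto (fun n : ℕ => hhat (g^[n + 1] R) / d n - s n) atTop (nhds 0) := by
    apply squeeze_zero_norm' (a := fun n => (C₁ + C₀) * |r n - β|)
    · filter_upwards [hshift, eventually_ge_atTop 1] with n hn hn1
      have hdp : 0 < d n := hdpos n hn1
      have hdp1 : 0 < d (n + 1) := hdpos (n + 1) (by omega)
      have heq : hhat (g^[n + 1] R) / d n - s n = u (n + 1) * (r n - β) := by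
        simp only [hs_def, hu_def, hr_def]
        field_simp
      rw [Real.norm_eq_abs, heq, abs_mul]
      have habs : |u (n + 1)| ≤ C₁ + C₀ := by
        rw [abs_le]; constructor <;> [linarith [hn.1]; exact hn.2]
      exact mul_le_mul_of_nonneg_right habs (abs_nonneg _)
    · have : Tendsto (fun n => (C₁ + C₀) * |r n - β|) atTop (nhds ((C₁ + C₀) * |β - β|)) :=
        ((hrβ.sub tendsto_const_nhds).abs).const_mul (C₁ + C₀)
      simpa using this
  have part3 : liminf (fun n : ℕ => hhat (g^[n] (g R)) / d n) atTop = β * liminf u atTop := by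
    have heq : (fun n : ℕ => hhat (g^[n] (g R)) / d n) = fun n : ℕ => hhat (g^[n + 1] R) / d n := by
      funext n
      rw [← Function.iterate_succ_apply]
    rw [heq]
    have h1 : liminf (fun n : ℕ => hhat (g^[n + 1] R) / d n) atTop = liminf s atTop :=
      my_liminf_eq_of_tendsto_sub hlbs hubs hws
    rw [h1]; simp only [hs_def]
    have hcu' : IsCoboundedUnder (· ≥ ·) atTop (fun n => u (n + 1)) :=
      (isBoundedUnder_of_eventually_le (hshift.mono fun n hn => hn.2)).isCoboundedUnder_ge
    have hlu' : IsBoundedUnder (· ≥ ·) atTop (fun n => u (n + 1)) :=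
      isBoundedUnder_of_eventually_ge (hshift.mono fun n hn => hn.1)
    rw [my_liminf_const_mul hβ0 hcu' hlu']
    congr 1
    exact liminf_nat_add u 1
  exact ⟨part1, part2, part3⟩
end
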